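/- Let g(k,b) = 6 + 10k² + 26k⁴ + 22k⁶ + b(12 + 8k² + 3k⁴ − 11k⁶) + b²(6 − 2k² − 5k⁴ + k⁶), and with x = k² set A(x) = x³ − 5x² − 2x + 6, B(x) = −11x³ + 3x² + 8x + 12, C(x) = 22x³ + 26x² + 10x + 6, Δ(x) = B(x)² − 4A(x)C(x), b₁(x) = (−B(x) − √Δ(x))/(2A(x)) and b₂(x) = (−B(x) + √Δ(x))/(2A(x)). Then g(k,b) < 0 holds in each of the following three cases: (1) 1 < k² < 2 + √10 and b > b₁(k²); (2) k² > 2 + √10 and b₁(k²) < b < b₂(k²); (3) k² = 2 + √10 and b > (23/921)(59 + 16√10). -/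
import Mathlib


/-- Let
`g(k,b) = 6 + 10k² + 26k⁴ + 22k⁶ + b(12 + 8k² + 3k⁴ - 11k⁶) + b²(6 - 2k² - 5k⁴ + k⁶)` and,
with `x = k²`, `A(x) = x³ - 5x² - 2x + 6`, `B(x) = -11x³ + 3x² + 8x + 12`,
`C(x) = 22x³ + 26x² + 10x + 6`, `Δ(x) = B(x)² - 4A(x)C(x)`,
`b₁(x) = (-B(x) - √Δ(x))/(2A(x))`, `b₂(x) = (-B(x) + √Δ(x))/(2A(x))`.
Then `g(k,b) < 0` in each of the cases: (1) `1 < k² < 2 + √10` and `b > b₁(k²)`;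
(2) `k² > 2 + √10` and `b₁(k²) < b < b₂(k²)`;
(3) `k² = 2 + √10` and `b > (23/921)(59 + 16√10)`. -/
theorem stmt18 (k b x A B C Δ b₁ b₂ : ℝ)
    (hx : x = k ^ 2)
    (hA : A = x ^ 3 - 5 * x ^ 2 - 2 * x + 6)
    (hB : B = -11 * x ^ 3 + 3 * x ^ 2 + 8 * x + 12)
    (hC : C = 22 * x ^ 3 + 26 * x ^ 2 + 10 * x + 6)
    (hΔ : Δ = B ^ 2 - 4 * A * C)
    (hb₁ : b₁ = (-B - Real.sqrt Δ) / (2 * A))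
    (hb₂ : b₂ = (-B + Real.sqrt Δ) / (2 * A))
    (hcase :
      (1 < x ∧ x < 2 + Real.sqrt 10 ∧ b₁ < b) ∨
      (2 + Real.sqrt 10 < x ∧ b₁ < b ∧ b < b₂) ∨
      (x = 2 + Real.sqrt 10 ∧ 23 / 921 * (59 + 16 * Real.sqrt 10) < b)) :
    6 + 10 * k ^ 2 + 26 * k ^ 4 + 22 * k ^ 6
        + b * (12 + 8 * k ^ 2 + 3 * k ^ 4 - 11 * k ^ 6)
        + b ^ 2 * (6 - 2 * k ^ 2 - 5 * k ^ 4 + k ^ 6) < 0 := by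
  have hs2 : Real.sqrt 10 ^ 2 = 10 := Real.sq_sqrt (by norm_num)
  have hs0 : 0 ≤ Real.sqrt 10 := Real.sqrt_nonneg 10
  have hs3 : 3 < Real.sqrt 10 := by nlinarith
  have hgoal : 6 + 10 * k ^ 2 + 26 * k ^ 4 + 22 * k ^ 6
        + b * (12 + 8 * k ^ 2 + 3 * k ^ 4 - 11 * k ^ 6)
        + b ^ 2 * (6 - 2 * k ^ 2 - 5 * k ^ 4 + k ^ 6)
      = A * b ^ 2 + B * b + C := by
    rw [hA, hB, hC, hx]; ring
  rw [hgoal]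
  have hid : 4 * A * (A * b ^ 2 + B * b + C) = (2 * A * b + B) ^ 2 - Δ := by
    rw [hΔ]; ring
  have hfac : A = ((x - 1) * (x - (2 - Real.sqrt 10))) * (x - (2 + Real.sqrt 10)) := by
    rw [hA]; linear_combination (x - 1) * hs2
  have hsd : 0 ≤ Real.sqrt Δ := Real.sqrt_nonneg Δ
  rcases hcase with ⟨h1, h2, h3⟩ | ⟨h1, h2, h3⟩ | ⟨h1, h2⟩
  · -- Case 1 : 1 < x < 2 + √10, b > b₁.  Here A < 0.
    have hAneg : A < 0 := by
      rw [hfac]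
      exact mul_neg_of_pos_of_neg
        (mul_pos (by linarith) (by linarith)) (by linarith)
    have h2A : 2 * A < 0 := by linarith
    rw [hb₁] at h3
    have hdiv : b * (2 * A) < -B - Real.sqrt Δ := (div_lt_iff_of_neg h2A).mp h3
    have ht : 2 * A * b + B < -Real.sqrt Δ := by
      have e : b * (2 * A) = 2 * A * b := by ring
      rw [e] at hdiv; linarith
    have hΔle : Δ ≤ Real.sqrt Δ ^ 2 := by
      rcases le_or_gt 0 Δ with h | h
      · rw [Real.sq_sqrt h]
      · nlinarith
    have p1 : 0 < -(2 * A * b + B) - Real.sqrt Δ := by linarith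
    have p2 : 0 < Real.sqrt Δ - (2 * A * b + B) := by linarith
    have hprod := mul_pos p1 p2
    have e2 : (-(2 * A * b + B) - Real.sqrt Δ) * (Real.sqrt Δ - (2 * A * b + B))
        = (2 * A * b + B) ^ 2 - Real.sqrt Δ ^ 2 := by ring
    rw [e2] at hprod
    have ht2 : Δ < (2 * A * b + B) ^ 2 := by linarith
    have hpos : 0 < 4 * A * (A * b ^ 2 + B * b + C) := by rw [hid]; linarith
    by_contra hc
    push_neg at hc
    have hle : 4 * A * (A * b ^ 2 + B * b + C) ≤ 0 :=
      mul_nonpos_of_nonpos_of_nonneg (by linarith) hc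
    linarith
  · -- Case 2 : x > 2 + √10, b₁ < b < b₂.  Here A > 0.
    have hApos : 0 < A := by
      rw [hfac]
      exact mul_pos (mul_pos (by linarith) (by linarith)) (by linarith)
    have h2A : 0 < 2 * A := by linarith
    rw [hb₁] at h2
    rw [hb₂] at h3
    have hd1 : -B - Real.sqrt Δ < b * (2 * A) := (div_lt_iff₀ h2A).mp h2
    have hd2 : b * (2 * A) < -B + Real.sqrt Δ := (lt_div_iff₀ h2A).mp h3
    have e : b * (2 * A) = 2 * A * b := by ring
    rw [e] at hd1 hd2
    have ht1 : -Real.sqrt Δ < 2 * A * b + B := by linarith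
    have ht2 : 2 * A * b + B < Real.sqrt Δ := by linarith
    have hΔpos : 0 < Δ := Real.sqrt_pos.mp (by linarith)
    have hΔeq : Real.sqrt Δ ^ 2 = Δ := Real.sq_sqrt (le_of_lt hΔpos)
    have p1 : 0 < Real.sqrt Δ - (2 * A * b + B) := by linarith
    have p2 : 0 < Real.sqrt Δ + (2 * A * b + B) := by linarith
    have hprod := mul_pos p1 p2
    have e2 : (Real.sqrt Δ - (2 * A * b + B)) * (Real.sqrt Δ + (2 * A * b + B))
        = Real.sqrt Δ ^ 2 - (2 * A * b + B) ^ 2 := by ring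
    rw [e2] at hprod
    have hlt : (2 * A * b + B) ^ 2 < Δ := by linarith
    have hneg : 4 * A * (A * b ^ 2 + B * b + C) < 0 := by rw [hid]; linarith
    by_contra hc
    push_neg at hc
    have hge : 0 ≤ 4 * A * (A * b ^ 2 + B * b + C) :=
      mul_nonneg (by linarith) hc
    linarith
  · -- Case 3 : x = 2 + √10, b > (23/921)(59 + 16√10).  Here A = 0.
    have hA0 : A = 0 := by
      rw [hA, h1]; linear_combination (Real.sqrt 10 + 1) * hs2
    have hBval : B = -222 * Real.sqrt 10 - 678 := by
      rw [hB, h1]; linear_combination (-11 * Real.sqrt 10 - 63) * hs2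
    have hCval : C = 598 * Real.sqrt 10 + 1886 := by
      rw [hC, h1]; linear_combination (22 * Real.sqrt 10 + 158) * hs2
    have hBneg : B < 0 := by rw [hBval]; linarith
    have hkey : B * (23 / 921 * (59 + 16 * Real.sqrt 10)) + C = 0 := by
      rw [hBval, hCval]; linear_combination (-3552 * 23 / 921 : ℝ) * hs2
    have hmul : B * b < B * (23 / 921 * (59 + 16 * Real.sqrt 10)) :=
      mul_lt_mul_of_neg_left h2 hBneg
    rw [hA0]
    linarith
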